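/- Let n ≥ 1, let f : ℝⁿ → ℝ be a C^∞ function, and let x̄ ∈ ℝⁿ be a point at which the formal Taylor series of f is not identically zero, i.e. there exists k ≥ 0 such that the k-th iterated derivative of f at x̄ is nonzero. Then there exist an open neighborhood V of x̄ and a countable family of C^∞ functions g_m : ℝⁿ → ℝ (m ∈ ℕ) such that: (a) the derivative of g_m is nonzero at every point of the zero set {g_m = 0} (so each zero set {g_m = 0} is a C^∞ hypersurface, i.e. an embedded codimension-1 submanifold of ℝⁿ); and (b) {x ∈ V : f(x) = 0} ⊆ ⋃_m {x : g_m(x) = 0}. In other words, the zero set of f near x̄ is smoothly countably (n−1)-rectifiable. -/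

import Mathlib

set_option maxHeartbeats 1000000
open Metric Set Function

variable {E : Type*} [NormedAddCommGroup E] [InnerProductSpace ℝ E]
  [FiniteDimensional ℝ E]

lemma mk_equiv (L : E →L[ℝ] ℝ) (w : E) (h : 1 + L w ≠ 0) :
    ∃ e : E ≃L[ℝ] E, (e : E →L[ℝ] E) = ContinuousLinearMap.id ℝ E + L.smulRight w ∧
      (e.symm : E →L[ℝ] E) = ContinuousLinearMap.id ℝ E - (1/(1 + L w)) • L.smulRight w := by
  have key1 : ∀ x : E, (ContinuousLinearMap.id ℝ E - (1/(1 + L w)) • L.smulRight w)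
      ((ContinuousLinearMap.id ℝ E + L.smulRight w) x) = x := by
    intro x
    simp only [ContinuousLinearMap.add_apply, ContinuousLinearMap.sub_apply,
      ContinuousLinearMap.smul_apply, ContinuousLinearMap.smulRight_apply,
      ContinuousLinearMap.id_apply, map_add, map_smul, smul_eq_mul]
    match_scalars
    · ring
    · field_simp; ring
  have key2 : ∀ x : E, (ContinuousLinearMap.id ℝ E + L.smulRight w)
      ((ContinuousLinearMap.id ℝ E - (1/(1 + L w)) • L.smulRight w) x) = x := by
    intro x
    simp only [ContinuousLinearMap.add_apply, ContinuousLinearMap.sub_apply,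
      ContinuousLinearMap.smul_apply, ContinuousLinearMap.smulRight_apply,
      ContinuousLinearMap.id_apply, map_sub, map_smul, smul_eq_mul]
    match_scalars
    · ring
    · field_simp; ring
  exact ⟨ContinuousLinearEquiv.equivOfInverse _ _ key1 key2, rfl, rfl⟩

lemma loc_lemma (g : E → ℝ) (hg : ContDiff ℝ (⊤ : ℕ∞) g) (p : E)
    (hgp : g p = 0) (hL : fderiv ℝ g p ≠ 0) :
    ∃ ρ > 0, ∃ h : E → ℝ, ContDiff ℝ (⊤ : ℕ∞) h ∧ (∀ y, fderiv ℝ h y ≠ 0) ∧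
      ∀ z ∈ ball p ρ, g z = 0 → h z = 0 := by
  classical
  have h1top : ((⊤:ℕ∞) : WithTop ℕ∞) ≠ 0 := by simp
  have hsucctop : ((⊤:ℕ∞) : WithTop ℕ∞) + 1 ≤ ((⊤:ℕ∞) : WithTop ℕ∞) := by exact_mod_cast le_top
  set L : E →L[ℝ] ℝ := fderiv ℝ g p with hLdef
  have hLpos : 0 < ‖L‖ := norm_pos_iff.mpr hL
  -- the model bump function and a bound on its derivative
  set φ₀ : ContDiffBump (0 : E) := ⟨1, 2, one_pos, one_lt_two⟩ with hφ₀def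
  obtain ⟨M₀', hM₀'⟩ : ∃ M, ∀ y, ‖fderiv ℝ φ₀ y‖ ≤ M := by
    have hc : Continuous fun y => ‖fderiv ℝ (φ₀ : E → ℝ) y‖ :=
      ((φ₀.contDiff (n := (⊤:ℕ∞))).fderiv_right hsucctop).continuous.norm
    have hcs : HasCompactSupport (fderiv ℝ (φ₀ : E → ℝ)) :=
      (φ₀.hasCompactSupport (E := E)).fderiv (𝕜 := ℝ)
    obtain ⟨C, hC⟩ := hc.bounded_above_of_compact_support hcs.norm
    exact ⟨C, fun y => by simpa using hC y⟩
  set M₀ : ℝ := max M₀' 0 with hM₀def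
  have hM₀ : ∀ y, ‖fderiv ℝ φ₀ y‖ ≤ M₀ := fun y => (hM₀' y).trans (le_max_left _ _)
  have hM₀0 : 0 ≤ M₀ := le_max_right _ _
  set t : ℝ := 4 * M₀ + 2 with htdef
  have ht : 0 < t := by positivity
  have h1t : (0:ℝ) < 1 + t := by positivity
  -- a vector w with L w = t
  obtain ⟨u₀, hu₀⟩ : ∃ u₀ : E, L u₀ ≠ 0 := by
    by_contra hcon
    push_neg at hcon
    exact hL (ContinuousLinearMap.ext fun x => by simp [hcon x])
  set w : E := (t / L u₀) • u₀ with hwdef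
  have hw : L w = t := by
    simp [hwdef, map_smul, smul_eq_mul]
    field_simp
  -- the map Φ
  set Φ : E → E := fun y => y + g y • w with hΦdef
  have hΦ : ContDiff ℝ (⊤:ℕ∞) Φ := contDiff_id.add (hg.smul contDiff_const)
  have hΦp : Φ p = p := by simp [hΦdef, hgp]
  -- invertible derivative at points of D
  set D : Set E := {y | 0 < 1 + fderiv ℝ g y w} with hDdef
  have hfdg_cont : Continuous fun y => fderiv ℝ g y w := by
    exact ((hg.fderiv_right hsucctop).continuous).clm_apply continuous_const
  have hD_open : IsOpen D := isOpen_lt continuous_const (continuous_const.add hfdg_cont)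
  have hpD : p ∈ D := by
    simp only [hDdef, mem_setOf_eq, ← hLdef, hw]
    linarith
  have hDeriv : ∀ y, HasFDerivAt Φ (ContinuousLinearMap.id ℝ E +
      (fderiv ℝ g y).smulRight w) y := by
    intro y
    exact (hasFDerivAt_id y).add
      (((hg.differentiable h1top) y).hasFDerivAt.smul_const w)
  have hDequiv : ∀ y ∈ D, ∃ e : E ≃L[ℝ] E,
      HasFDerivAt Φ (e : E →L[ℝ] E) y ∧
      (e.symm : E →L[ℝ] E) = ContinuousLinearMap.id ℝ E -
        (1/(1 + fderiv ℝ g y w)) • (fderiv ℝ g y).smulRight w := by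
    intro y hy
    obtain ⟨e, he1, he2⟩ := mk_equiv (fderiv ℝ g y) w (by simp only [hDdef, mem_setOf_eq] at hy; linarith)
    exact ⟨e, he1 ▸ hDeriv y, he2⟩
  -- the partial homeomorph from the inverse function theorem
  obtain ⟨e₀, he₀, he₀s⟩ := hDequiv p hpD
  have hstrict : HasStrictFDerivAt Φ (e₀ : E →L[ℝ] E) p :=
    hΦ.contDiffAt.hasStrictFDerivAt' he₀ h1top
  set P : OpenPartialHomeomorph E E := hstrict.toOpenPartialHomeomorph Φ with hPdef
  have hPcoe : (P : E → E) = Φ := rfl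
  set Ψ : E → E := ⇑P.symm with hΨdef
  have hp_source : p ∈ P.source := hstrict.mem_toOpenPartialHomeomorph_source
  have hp_target : p ∈ P.target := by
    have := P.map_source hp_source
    rwa [hPcoe, hΦp] at this
  have hΨp : Ψ p = p := by
    have := P.left_inv hp_source
    rwa [hPcoe, hΦp] at this
  -- open set where Ψ is smooth
  set U : Set E := P.target ∩ Ψ ⁻¹' (P.source ∩ D) with hUdef
  have hU_open : IsOpen U := P.isOpen_inter_preimage_symm (P.open_source.inter hD_open)
  have hpU : p ∈ U := ⟨hp_target, by rw [mem_preimage, hΨp]; exact ⟨hp_source, hpD⟩⟩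
  have hΨ_smooth : ∀ a ∈ U, ContDiffAt ℝ (⊤:ℕ∞) Ψ a := by
    intro a ha
    obtain ⟨e, he, _⟩ := hDequiv (Ψ a) ha.2.2
    exact P.contDiffAt_symm ha.1 (by rw [hPcoe]; exact he) (by rw [hPcoe]; exact hΦ.contDiffAt)
  -- the function ψ = L ∘ Ψ
  set ψ : E → ℝ := fun y => L (Ψ y) with hψdef
  have hψ_smooth : ∀ a ∈ U, ContDiffAt ℝ (⊤:ℕ∞) ψ a := fun a ha =>
    (L.contDiff.contDiffAt).comp a (hΨ_smooth a ha)
  -- derivative of ψ at p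
  have hΨ'p : HasFDerivAt Ψ (e₀.symm : E →L[ℝ] E) p := by
    have h := hstrict.to_localInverse (f := Φ)
    rw [hΦp] at h
    exact h.hasFDerivAt
  have hψ'p : HasFDerivAt ψ (L.comp (e₀.symm : E →L[ℝ] E)) p := L.hasFDerivAt.comp p hΨ'p
  have hcomp_eq : L.comp (e₀.symm : E →L[ℝ] E) = (1/(1+t)) • L := by
    rw [he₀s]
    ext x
    simp only [ContinuousLinearMap.coe_comp', comp_apply, ContinuousLinearMap.sub_apply,
      ContinuousLinearMap.smul_apply, ContinuousLinearMap.smulRight_apply,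
      ContinuousLinearMap.id_apply, map_sub, map_smul, smul_eq_mul, ← hLdef, hw]
    field_simp
    ring
  set c₀ : ℝ := 2 * ‖L‖ / (1 + t) with hc₀def
  have hc₀pos : 0 < c₀ := by positivity
  have hψ'p_norm : ‖fderiv ℝ ψ p‖ < c₀ := by
    rw [hψ'p.fderiv, hcomp_eq, norm_smul]
    have habs : ‖(1/(1+t) : ℝ)‖ = 1/(1+t) := by
      rw [Real.norm_eq_abs, abs_of_pos (by positivity)]
    have key : ‖L‖ * (1/(1+t)) < (2*‖L‖) * (1/(1+t)) :=
      mul_lt_mul_of_pos_right (by linarith) (by positivity)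
    calc ‖(1/(1+t) : ℝ)‖ * ‖L‖ = ‖L‖ * (1/(1+t)) := by rw [habs]; ring
      _ < (2*‖L‖) * (1/(1+t)) := key
      _ = c₀ := by rw [hc₀def]; ring
  -- continuity of fderiv ψ at p
  have hfψ_contAt : ContinuousAt (fun y => fderiv ℝ ψ y) p :=
    ((hψ_smooth p hpU).fderiv_right hsucctop).continuousAt
  -- choose ε
  have hev : ∀ᶠ z in nhds p, (Ψ (Φ z) = z ∧ z ∈ U) ∧ ‖fderiv ℝ ψ z‖ < c₀ := by
    have ev1 : ∀ᶠ z in nhds p, Ψ (Φ z) = z := by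
      have := P.eventually_left_inverse hp_source
      simpa [hPcoe] using this
    have ev2 : ∀ᶠ z in nhds p, z ∈ U := hU_open.mem_nhds hpU
    have ev3 : ∀ᶠ z in nhds p, ‖fderiv ℝ ψ z‖ < c₀ := by
      have : ContinuousAt (fun y => ‖fderiv ℝ ψ y‖) p := hfψ_contAt.norm
      exact this.eventually_lt continuousAt_const hψ'p_norm
    exact (ev1.and ev2).and ev3
  obtain ⟨ε, hεpos, hε⟩ := Metric.eventually_nhds_iff_ball.mp hev
  set ρ : ℝ := ε / 4 with hρdef
  have hρpos : 0 < ρ := by positivity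
  have hball : ∀ y ∈ closedBall p (3*ρ), (Ψ (Φ y) = y ∧ y ∈ U) ∧ ‖fderiv ℝ ψ y‖ < c₀ := by
    intro y hy
    apply hε
    rw [mem_ball]
    rw [mem_closedBall] at hy
    calc dist y p ≤ 3 * ρ := hy
    _ < ε := by rw [hρdef]; linarith
  -- the rescaled bump function
  set φ : E → ℝ := fun y => φ₀ (ρ⁻¹ • (y - p)) with hφdef
  have hinner : ∀ y : E, HasFDerivAt (fun z : E => ρ⁻¹ • (z - p))
      (ρ⁻¹ • ContinuousLinearMap.id ℝ E) y := fun y =>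
    ((hasFDerivAt_id y).sub_const p).const_smul ρ⁻¹
  have hφ_smooth : ContDiff ℝ (⊤:ℕ∞) φ :=
    (φ₀.contDiff (n := (⊤:ℕ∞))).comp ((contDiff_id.sub contDiff_const).const_smul ρ⁻¹)
  have hφ1 : ∀ y ∈ closedBall p ρ, φ y = 1 := by
    intro y hy
    apply φ₀.one_of_mem_closedBall
    rw [mem_closedBall, dist_zero_right, norm_smul, Real.norm_eq_abs,
      abs_of_pos (by positivity : (0:ℝ) < ρ⁻¹)]
    have hyρ : ‖y - p‖ ≤ ρ := by rwa [mem_closedBall, dist_eq_norm] at hy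
    calc ρ⁻¹ * ‖y - p‖ ≤ ρ⁻¹ * ρ := by
          exact mul_le_mul_of_nonneg_left hyρ (by positivity)
      _ = 1 := inv_mul_cancel₀ hρpos.ne'
  have hφ0 : ∀ z : E, 2*ρ ≤ ‖z - p‖ → φ z = 0 := by
    intro z hz
    apply φ₀.zero_of_le_dist
    rw [dist_zero_right, norm_smul, Real.norm_eq_abs,
      abs_of_pos (by positivity : (0:ℝ) < ρ⁻¹)]
    show (2:ℝ) ≤ ρ⁻¹ * ‖z - p‖
    calc (2:ℝ) = ρ⁻¹ * (2*ρ) := by field_simp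
      _ ≤ ρ⁻¹ * ‖z - p‖ := mul_le_mul_of_nonneg_left hz (by positivity)
  have hφd : ∀ y, HasFDerivAt φ
      ((fderiv ℝ φ₀ (ρ⁻¹ • (y - p))).comp (ρ⁻¹ • ContinuousLinearMap.id ℝ E)) y := by
    intro y
    show HasFDerivAt ((φ₀ : E → ℝ) ∘ fun z : E => ρ⁻¹ • (z - p)) _ y
    exact HasFDerivAt.comp y
      (((φ₀.contDiffAt (n := (⊤:ℕ∞)) (x := ρ⁻¹ • (y - p))).differentiableAt
        h1top).hasFDerivAt) (hinner y)
  have hφd_norm : ∀ y, ‖fderiv ℝ φ y‖ ≤ M₀ / ρ := by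
    intro y
    rw [(hφd y).fderiv]
    apply ContinuousLinearMap.opNorm_le_bound _ (by positivity)
    intro x
    rw [ContinuousLinearMap.coe_comp', comp_apply, ContinuousLinearMap.smul_apply,
      ContinuousLinearMap.id_apply]
    calc ‖fderiv ℝ φ₀ (ρ⁻¹ • (y - p)) (ρ⁻¹ • x)‖
        ≤ ‖fderiv ℝ φ₀ (ρ⁻¹ • (y - p))‖ * ‖ρ⁻¹ • x‖ := ContinuousLinearMap.le_opNorm _ _
      _ ≤ M₀ * (ρ⁻¹ * ‖x‖) := by
          rw [norm_smul, Real.norm_eq_abs, abs_of_pos (by positivity : (0:ℝ) < ρ⁻¹)]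
          exact mul_le_mul (hM₀ _) le_rfl (by positivity) hM₀0
      _ = M₀ / ρ * ‖x‖ := by rw [div_eq_mul_inv]; ring
  have hψp_eq : ψ p = L p := by rw [hψdef]; simp only [hΨp]
  -- the localized function u and the final function h
  set u : E → ℝ := fun y => φ y * (ψ y - L p) with hudef
  have hcb23 : closedBall p (2*ρ) ⊆ closedBall p (3*ρ) := closedBall_subset_closedBall (by linarith)
  have hu_ev0 : ∀ y ∉ closedBall p (2*ρ), u =ᶠ[nhds y] fun _ => (0:ℝ) := by
    intro y hy
    have hopen : IsOpen (closedBall p (2*ρ))ᶜ := isOpen_compl_iff.mpr Metric.isClosed_closedBall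
    filter_upwards [hopen.mem_nhds hy] with z hz
    have : 2*ρ ≤ ‖z - p‖ := by
      rw [mem_compl_iff, mem_closedBall, not_le, dist_eq_norm] at hz
      linarith
    simp [hudef, hφ0 z this]
  have hball3 : ball p (3*ρ) ⊆ closedBall p (3*ρ) := ball_subset_closedBall
  have hu_contAt : ∀ y, ContDiffAt ℝ (⊤:ℕ∞) u y := by
    intro y
    by_cases hy : y ∈ ball p (3*ρ)
    · have hyU : y ∈ U := (hball y (hball3 hy)).1.2
      exact (hφ_smooth.contDiffAt).mul ((hψ_smooth y hyU).sub contDiffAt_const)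
    · have hy2 : y ∉ closedBall p (2*ρ) := by
        intro hc
        exact hy (lt_of_le_of_lt (mem_closedBall.mp hc) (by linarith) : dist y p < 3*ρ)
      exact (contDiffAt_const (c := (0:ℝ))).congr_of_eventuallyEq (hu_ev0 y hy2)
  have hu : ContDiff ℝ (⊤:ℕ∞) u := contDiff_iff_contDiffAt.mpr hu_contAt
  have hψdiff : ∀ y ∈ closedBall p (3*ρ), DifferentiableAt ℝ ψ y := fun y hy =>
    (hψ_smooth y (hball y hy).1.2).differentiableAt h1top
  have hmv : ∀ y ∈ closedBall p (2*ρ), |ψ y - ψ p| ≤ c₀ * (2*ρ) := by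
    intro y hy
    have key := Convex.norm_image_sub_le_of_norm_fderiv_le (f := ψ) (C := c₀)
      (fun x hx => hψdiff x hx) (fun x hx => (hball x hx).2.le)
      (convex_closedBall p (3*ρ)) (mem_closedBall_self (by positivity)) (hcb23 hy)
    rw [Real.norm_eq_abs] at key
    calc |ψ y - ψ p| ≤ c₀ * ‖y - p‖ := key
      _ ≤ c₀ * (2*ρ) := by
          apply mul_le_mul_of_nonneg_left _ hc₀pos.le
          rwa [mem_closedBall, dist_eq_norm] at hy
  have hu_bound : ∀ y, ‖fderiv ℝ u y‖ ≤ t * ‖L‖ / (1 + t) := by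
    intro y
    by_cases hy : y ∈ closedBall p (2*ρ)
    · have hyU : y ∈ U := (hball y (hcb23 hy)).1.2
      have hdφ : DifferentiableAt ℝ φ y := hφ_smooth.differentiable h1top y
      have hdψ : DifferentiableAt ℝ ψ y := hψdiff y (hcb23 hy)
      have hprod : fderiv ℝ u y =
          φ y • fderiv ℝ (fun z => ψ z - L p) y + (ψ y - L p) • fderiv ℝ φ y := by
        rw [hudef]
        exact fderiv_mul hdφ (hdψ.sub_const _)
      rw [hprod, fderiv_sub_const]
      have hφy_abs : |φ y| ≤ 1 := by
        rw [abs_of_nonneg φ₀.nonneg]; exact φ₀.le_one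
      have hψy : |ψ y - L p| ≤ c₀ * (2*ρ) := by rw [← hψp_eq]; exact hmv y hy
      calc ‖φ y • fderiv ℝ ψ y + (ψ y - L p) • fderiv ℝ φ y‖
          ≤ ‖φ y • fderiv ℝ ψ y‖ + ‖(ψ y - L p) • fderiv ℝ φ y‖ := norm_add_le _ _
        _ = |φ y| * ‖fderiv ℝ ψ y‖ + |ψ y - L p| * ‖fderiv ℝ φ y‖ := by
            rw [norm_smul, norm_smul, Real.norm_eq_abs, Real.norm_eq_abs]
        _ ≤ 1 * c₀ + (c₀ * (2*ρ)) * (M₀ / ρ) := by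
            apply add_le_add
            · exact mul_le_mul hφy_abs (hball y (hcb23 hy)).2.le (norm_nonneg _) one_pos.le
            · exact mul_le_mul hψy (hφd_norm y) (norm_nonneg _) (by positivity)
        _ = t * ‖L‖ / (1 + t) := by
            rw [hc₀def, htdef]
            field_simp
            ring
    · have : fderiv ℝ u y = fderiv ℝ (fun _ => (0:ℝ)) y :=
        Filter.EventuallyEq.fderiv_eq (hu_ev0 y hy)
      rw [this, fderiv_fun_const]
      simp only [Pi.zero_apply, norm_zero]
      positivity
  refine ⟨ρ, hρpos, fun y => L y - L p - u y, ?_, ?_, ?_⟩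
  · exact ((L.contDiff).sub contDiff_const).sub hu
  · intro y
    have hder : fderiv ℝ (fun y => L y - L p - u y) y = L - fderiv ℝ u y := by
      have h1 : HasFDerivAt (fun y : E => L y - L p) (L : E →L[ℝ] ℝ) y :=
        L.hasFDerivAt.sub_const _
      exact (h1.sub ((hu.differentiable h1top y).hasFDerivAt)).fderiv
    rw [hder]
    intro hcon
    have : (L : E →L[ℝ] ℝ) = fderiv ℝ u y := sub_eq_zero.mp hcon
    have hle : ‖L‖ ≤ t * ‖L‖ / (1 + t) := this ▸ hu_bound y
    have hlt : t * ‖L‖ / (1 + t) < ‖L‖ := by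
      rw [div_lt_iff₀ h1t]
      nlinarith [hLpos]
    linarith
  · intro z hz hgz
    have hz3 : z ∈ closedBall p (3*ρ) := by
      rw [mem_closedBall]
      have := mem_ball.mp hz
      linarith
    have hΦz : Φ z = z := by simp [hΦdef, hgz]
    have hΨz : Ψ z = z := by
      have := (hball z hz3).1.1
      rwa [hΦz] at this
    have hφz : φ z = 1 := hφ1 z (ball_subset_closedBall hz)
    simp only [hudef, hφz, hψdef, hΨz, one_mul]
    ring

lemma cover_lemma (g : E → ℝ) (hg : ContDiff ℝ (⊤:ℕ∞) g) :
    ∃ H : ℕ → E → ℝ, (∀ m, ContDiff ℝ (⊤:ℕ∞) (H m)) ∧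
      (∀ m y, H m y = 0 → fderiv ℝ (H m) y ≠ 0) ∧
      {x | g x = 0 ∧ fderiv ℝ g x ≠ 0} ⊆ ⋃ m : ℕ, {x | H m x = 0} := by
  classical
  set S := {x | g x = 0 ∧ fderiv ℝ g x ≠ 0} with hSdef
  have hch : ∀ p : E, ∃ ρ : ℝ, ∃ h : E → ℝ, 0 < ρ ∧ ContDiff ℝ (⊤:ℕ∞) h ∧
      (∀ y, h y = 0 → fderiv ℝ h y ≠ 0) ∧
      (p ∈ S → ∀ z ∈ ball p ρ, g z = 0 → h z = 0) := by
    intro p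
    by_cases hp : p ∈ S
    · obtain ⟨ρ, hρ, h, h1, h2, h3⟩ := loc_lemma g hg p hp.1 hp.2
      exact ⟨ρ, h, hρ, h1, fun y _ => h2 y, fun _ => h3⟩
    · exact ⟨1, fun _ => 1, one_pos, contDiff_const,
        fun y hy => absurd hy one_ne_zero, fun hmem => absurd hmem hp⟩
  choose ρ h hρ hh1 hh2 hh3 using hch
  have hnh : ∀ p ∈ S, ball p (ρ p) ∈ nhdsWithin p S := fun p _ =>
    mem_nhdsWithin_of_mem_nhds (ball_mem_nhds p (hρ p))
  obtain ⟨T, hTS, hTc, hTcov⟩ := TopologicalSpace.countable_cover_nhdsWithin hnh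
  rcases T.eq_empty_or_nonempty with hT | hT
  · refine ⟨fun _ _ => 1, fun _ => contDiff_const,
      fun m y hy => absurd hy one_ne_zero, ?_⟩
    intro x hx
    have := hTcov hx
    rw [hT] at this
    simp at this
  · obtain ⟨seq, hseq⟩ := hTc.exists_eq_range hT
    refine ⟨fun m => h (seq m), fun m => hh1 _, fun m => hh2 _, ?_⟩
    intro x hx
    obtain ⟨p, hpT, hxball⟩ := mem_iUnion₂.mp (hTcov hx)
    obtain ⟨m, hm⟩ : ∃ m, seq m = p := by
      have : p ∈ range seq := hseq ▸ hpT
      exact this.imp fun m hm => hm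
    refine mem_iUnion.mpr ⟨m, ?_⟩
    have hx0 : g x = 0 := hx.1
    show h (seq m) x = 0
    rw [hm]
    exact hh3 p (hTS hpT) x hxball hx0

/-- if `f : ℝⁿ → ℝ` is `C^∞` and its formal Taylor series at `x̄` is not
identically zero, then there is an open neighborhood `V` of `x̄` and countably many smooth
functions `g_m` whose derivative does not vanish on their zero sets (so each `{g_m = 0}` is a
smooth hypersurface) such that the zero set of `f` in `V` is covered by `⋃_m {g_m = 0}`:
the zero set of `f` near `x̄` is smoothly countably `(n−1)`-rectifiable. -/
theorem zero_set_countably_rectifiable {n : ℕ} (hn : 1 ≤ n)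
    (f : EuclideanSpace ℝ (Fin n) → ℝ) (hf : ContDiff ℝ (⊤ : ℕ∞) f)
    (x₀ : EuclideanSpace ℝ (Fin n))
    (hx₀ : ∃ k : ℕ, iteratedFDeriv ℝ k f x₀ ≠ 0) :
    ∃ V : Set (EuclideanSpace ℝ (Fin n)), IsOpen V ∧ x₀ ∈ V ∧
      ∃ g : ℕ → EuclideanSpace ℝ (Fin n) → ℝ,
        (∀ m, ContDiff ℝ (⊤ : ℕ∞) (g m)) ∧
        (∀ m x, g m x = 0 → fderiv ℝ (g m) x ≠ 0) ∧
        {x | x ∈ V ∧ f x = 0} ⊆ ⋃ m : ℕ, {x | g m x = 0} := by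
  classical
  have h1top : ((⊤:ℕ∞) : WithTop ℕ∞) ≠ 0 := by simp
  set k₀ : ℕ := Nat.find hx₀ with hk₀def
  have hk₀ : iteratedFDeriv ℝ k₀ f x₀ ≠ 0 := Nat.find_spec hx₀
  have hsmooth_iFD : ∀ m : ℕ, ContDiff ℝ (⊤:ℕ∞) (iteratedFDeriv ℝ m f) := by
    intro m
    refine hf.iteratedFDeriv_right ?_
    exact_mod_cast le_top
  set V : Set (EuclideanSpace ℝ (Fin n)) := {x | iteratedFDeriv ℝ k₀ f x ≠ 0} with hVdef
  have hVopen : IsOpen V := isOpen_ne.preimage (hsmooth_iFD k₀).continuous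
  -- countable dense set
  obtain ⟨D, hDc, hDd⟩ := TopologicalSpace.exists_countable_dense (EuclideanSpace ℝ (Fin n))
  haveI : Countable D := hDc.to_subtype
  -- index type
  let ι := (m : ℕ) × (Fin m → D)
  haveI : Countable ι := by infer_instance
  haveI : Nonempty ι := ⟨⟨0, fun i => i.elim0⟩⟩
  -- the directional derivative functions
  let G : ι → (EuclideanSpace ℝ (Fin n)) → ℝ := fun q x => iteratedFDeriv ℝ q.1 f x (fun i => (q.2 i : (EuclideanSpace ℝ (Fin n))))
  have hGsmooth : ∀ q, ContDiff ℝ (⊤:ℕ∞) (G q) := by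
    intro q
    exact (ContinuousMultilinearMap.apply ℝ (fun _ : Fin q.1 => (EuclideanSpace ℝ (Fin n))) ℝ
      (fun i => (q.2 i : (EuclideanSpace ℝ (Fin n))))).contDiff.comp (hsmooth_iFD q.1)
  choose H hH1 hH2 hH3 using fun q => cover_lemma (G q) (hGsmooth q)
  obtain ⟨σ, hσ⟩ := exists_surjective_nat (ι × ℕ)
  refine ⟨V, hVopen, hk₀, fun j => H (σ j).1 (σ j).2, fun j => hH1 _ _,
    fun j => hH2 _ _, ?_⟩
  rintro x ⟨hxV, hfx⟩
  -- find the minimal order with nonvanishing derivative at x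
  have hfind : ∃ j : ℕ, iteratedFDeriv ℝ j f x ≠ 0 := ⟨k₀, hxV⟩
  set j := Nat.find hfind with hjdef
  have hj : iteratedFDeriv ℝ j f x ≠ 0 := Nat.find_spec hfind
  have hj0 : j ≠ 0 := by
    intro h0
    apply hj
    rw [h0]
    exact ContinuousMultilinearMap.ext fun v => by
      rw [iteratedFDeriv_zero_apply, hfx]; simp
  set m := j - 1 with hmdef
  have hmsucc : m + 1 = j := Nat.succ_pred_eq_of_pos (Nat.pos_of_ne_zero hj0)
  have hm0 : iteratedFDeriv ℝ m f x = 0 := by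
    by_contra hcon
    exact Nat.find_min hfind (by omega) hcon
  have hm1 : iteratedFDeriv ℝ (m+1) f x ≠ 0 := by rw [hmsucc]; exact hj
  obtain ⟨vec, hvec⟩ : ∃ vec : Fin (m+1) → (EuclideanSpace ℝ (Fin n)), iteratedFDeriv ℝ (m+1) f x vec ≠ 0 := by
    by_contra hcon
    push_neg at hcon
    exact hm1 (ContinuousMultilinearMap.ext fun v => by rw [hcon v]; simp)
  set B : ContinuousMultilinearMap ℝ (fun _ : Fin m => (EuclideanSpace ℝ (Fin n))) ℝ :=
    fderiv ℝ (iteratedFDeriv ℝ m f) x (vec 0) with hBdef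
  have hBtail : B (Fin.tail vec) ≠ 0 := by
    rw [hBdef, ← iteratedFDeriv_succ_apply_left]
    exact hvec
  have hOopen : IsOpen {w : Fin m → (EuclideanSpace ℝ (Fin n)) | B w ≠ 0} := isOpen_ne.preimage B.coe_continuous
  have hdense : Dense (Set.pi Set.univ fun _ : Fin m => D) :=
    dense_pi Set.univ (fun i _ => hDd)
  obtain ⟨w, hwD, hwB⟩ := hdense.exists_mem_open hOopen ⟨Fin.tail vec, hBtail⟩
  set q : ι := ⟨m, fun i => ⟨w i, hwD i (Set.mem_univ i)⟩⟩ with hqdef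
  have hGx : G q x = 0 := by
    show iteratedFDeriv ℝ m f x _ = 0
    rw [hm0]
    simp
  have hGd : fderiv ℝ (G q) x ≠ 0 := by
    have hdiff : DifferentiableAt ℝ (iteratedFDeriv ℝ m f) x :=
      (hsmooth_iFD m).differentiable h1top x
    have happ := fderiv_continuousMultilinear_apply_const_apply hdiff
      (fun i => ((q.2 i : (EuclideanSpace ℝ (Fin n))))) (vec 0)
    intro hcon
    rw [hcon] at happ
    simp only [ContinuousLinearMap.zero_apply] at happ
    exact hwB happ.symm
  have hxcov := hH3 q ⟨hGx, hGd⟩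
  obtain ⟨mm, hmm⟩ := mem_iUnion.mp hxcov
  obtain ⟨jj, hjj⟩ := hσ (q, mm)
  refine mem_iUnion.mpr ⟨jj, ?_⟩
  show H (σ jj).1 (σ jj).2 x = 0
  rw [hjj]
  exact hmm
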